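/- Let Π be a set of orderings on a finite vertex set V and let T' be a tree with vertex set V such that every σ ∈ Π satisfies Property D with respect to T' (i.e., T' is a DFS-tree support of Π). Let V* ⊆ V be such that the subgraph of T' induced by V* is a tree and V* contains the first vertex of every ordering in Π. For each connected component C of T' − V*, let v_C denote the unique vertex of V* that is adjacent in T' to a vertex of C. Let T be the graph on V consisting of the induced subtree T'[V*] together with, for each component C of T' − V* and each vertex x of C, the edge {v_C, x}. Then T is a tree in which every vertex of V ∖ V* is a leaf, and every σ ∈ Π satisfies Property D with respect to T (i.e., T is a DFS-tree support of Π). -/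

import Mathlib

/-- Property D for an ordering (given as a strict-order relation `lt` on the
vertices) with respect to a graph `H`: the four-point characterization of
DFS-orderings. -/
def PropertyD {V : Type*} (H : SimpleGraph V) (lt : V → V → Prop) : Prop :=
  ∀ a b c : V, lt a b → lt b c → H.Adj a c → ¬ H.Adj a b →
    ∃ d : V, lt a d ∧ lt d b ∧ H.Adj d b

namespace Stmt7Helper

open SimpleGraph

variable {V : Type*}

/-- first edge of a non-nil walk -/
lemma first_edge_mem {G : SimpleGraph V} {u v : V} (p : G.Walk u v) (hnn : ¬ p.Nil) :
    s(u, p.getVert 1) ∈ p.edges := by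
  cases p with
  | nil => simp at hnn
  | cons h q => simp [SimpleGraph.Walk.edges_cons]

/-- `x` and `y` are outside `Vs` and in the same component of `T' − Vs`. -/
def InComp (T' : SimpleGraph V) (Vs : Set V) (x y : V) : Prop :=
  ∃ (hx : x ∉ Vs) (hy : y ∉ Vs), (T'.induce (Vsᶜ : Set V)).Reachable ⟨x, hx⟩ ⟨y, hy⟩

variable {T' : SimpleGraph V} {Vs : Set V} {x y z : V}

lemma InComp.not_left (h : InComp T' Vs x y) : x ∉ Vs := by obtain ⟨hx, -, -⟩ := h; exact hx

lemma InComp.not_right (h : InComp T' Vs x y) : y ∉ Vs := by obtain ⟨-, hy, -⟩ := h; exact hy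

lemma incomp_refl (hx : x ∉ Vs) : InComp T' Vs x x := ⟨hx, hx, Reachable.refl _⟩

lemma InComp.symm (h : InComp T' Vs x y) : InComp T' Vs y x := by
  obtain ⟨hx, hy, hr⟩ := h; exact ⟨hy, hx, hr.symm⟩

lemma InComp.trans (h : InComp T' Vs x y) (h' : InComp T' Vs y z) : InComp T' Vs x z := by
  obtain ⟨hx, hy, hr⟩ := h; obtain ⟨hy', hz, hr'⟩ := h'
  exact ⟨hx, hz, hr.trans hr'⟩

lemma incomp_adj (hx : x ∉ Vs) (hy : y ∉ Vs) (h : T'.Adj x y) : InComp T' Vs x y :=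
  ⟨hx, hy, SimpleGraph.Adj.reachable h⟩

lemma walk_outside (h : InComp T' Vs x y) : ∃ p : T'.Walk x y, ∀ z ∈ p.support, z ∉ Vs := by
  obtain ⟨hx, hy, ⟨q⟩⟩ := h
  refine ⟨q.map (SimpleGraph.Embedding.induce (Vsᶜ : Set V)).toHom, ?_⟩
  intro z hz
  replace hz : z ∈ (q.map (SimpleGraph.Embedding.induce (Vsᶜ : Set V)).toHom).support := hz
  rw [SimpleGraph.Walk.support_map] at hz
  obtain ⟨z', hz', rfl⟩ := List.mem_map.mp hz
  exact z'.2

lemma walk_inside (hVs : (T'.induce Vs).Connected) (hx : x ∈ Vs) (hy : y ∈ Vs) :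
    ∃ p : T'.Walk x y, ∀ z ∈ p.support, z ∈ Vs := by
  obtain ⟨q⟩ := hVs.preconnected ⟨x, hx⟩ ⟨y, hy⟩
  refine ⟨q.map (SimpleGraph.Embedding.induce Vs).toHom, ?_⟩
  intro z hz
  replace hz : z ∈ (q.map (SimpleGraph.Embedding.induce Vs).toHom).support := hz
  rw [SimpleGraph.Walk.support_map] at hz
  obtain ⟨z', hz', rfl⟩ := List.mem_map.mp hz
  exact z'.2

variable {g : V → V}

/-- The attachment vertex is unique: any `Vs`-vertex adjacent to `x ∉ Vs` equals `g x`. -/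
lemma attach_unique [DecidableEq V] (hT' : T'.IsTree) (hVs : (T'.induce Vs).Connected)
    (hg2 : ∀ x, ∀ hx : x ∉ Vs, ∃ y, ∃ hy : y ∉ Vs,
      (T'.induce (Vsᶜ : Set V)).Reachable ⟨x, hx⟩ ⟨y, hy⟩ ∧ T'.Adj (g x) y)
    (hgx : g x ∈ Vs)
    (hx : x ∉ Vs) {w : V} (hw : w ∈ Vs) (hadj : T'.Adj x w) : w = g x := by
  obtain ⟨y, hy, hreach, hady⟩ := hg2 x hx
  obtain ⟨pVs, hpVs⟩ := walk_inside hVs hgx hw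
  have hyVs : y ∉ pVs.bypass.support := fun hmem =>
    hy (hpVs _ (SimpleGraph.Walk.support_bypass_subset _ hmem))
  have hQ1 : (SimpleGraph.Walk.cons hady.symm pVs.bypass).IsPath :=
    (SimpleGraph.Walk.bypass_isPath pVs).cons hyVs
  obtain ⟨pC, hpC⟩ := walk_outside (⟨hx, hy, hreach⟩ : InComp T' Vs x y)
  have hwC : w ∉ pC.bypass.support := fun hmem =>
    (hpC _ (SimpleGraph.Walk.support_bypass_subset _ hmem)) hw
  have hQ2 : (SimpleGraph.Walk.cons hadj.symm pC.bypass).IsPath :=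
    (SimpleGraph.Walk.bypass_isPath pC).cons hwC
  have huniq := (SimpleGraph.isTree_iff_existsUnique_path.mp hT').2 w y
  have heq : SimpleGraph.Walk.cons hadj.symm pC.bypass
      = (SimpleGraph.Walk.cons hady.symm pVs.bypass).reverse :=
    huniq.unique hQ2 hQ1.reverse
  have hmem : g x ∈ (SimpleGraph.Walk.cons hadj.symm pC.bypass).support := by
    rw [heq, SimpleGraph.Walk.support_reverse, List.mem_reverse,
      SimpleGraph.Walk.support_cons]
    right
    exact SimpleGraph.Walk.start_mem_support _
  rw [SimpleGraph.Walk.support_cons, List.mem_cons] at hmem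
  rcases hmem with hmem | hmem
  · exact hmem.symm
  · exact absurd hgx (hpC _ (SimpleGraph.Walk.support_bypass_subset _ hmem))

/-- Structure of the neighborhood of a vertex outside `Vs`. -/
lemma nbr_struct [DecidableEq V] (hT' : T'.IsTree) (hVs : (T'.induce Vs).Connected)
    (hg2 : ∀ x, ∀ hx : x ∉ Vs, ∃ y, ∃ hy : y ∉ Vs,
      (T'.induce (Vsᶜ : Set V)).Reachable ⟨x, hx⟩ ⟨y, hy⟩ ∧ T'.Adj (g x) y)
    (hgx : g x ∈ Vs)
    (hx : x ∉ Vs) {n : V} (hadj : T'.Adj x n) : n = g x ∨ InComp T' Vs x n := by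
  by_cases hn : n ∈ Vs
  · exact Or.inl (attach_unique hT' hVs hg2 hgx hx hn hadj)
  · exact Or.inr (incomp_adj hx hn hadj)

section Order

variable {lt : V → V → Prop}

/-- Every vertex other than the first has an earlier neighbor. -/
lemma exists_earlier_nbr (hconn : T'.Connected)
    (h3 : IsTrichotomous V lt) (hir : IsIrrefl V lt)
    (hPD : PropertyD T' lt) {r : V} (hr : ∀ x, x ≠ r → lt r x) :
    ∀ b, b ≠ r → ∃ d, lt d b ∧ T'.Adj d b := by
  intro b hb
  obtain ⟨p⟩ := hconn.preconnected r b
  obtain ⟨dd, hdmem, hdS, hdnS⟩ := p.exists_boundary_dart {z | lt z b} (hr b hb) (hir.1 b)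
  rcases (haveI := h3; trichotomous_of lt dd.snd b) with h | h | h
  · exact absurd h hdnS
  · exact ⟨dd.fst, hdS, h ▸ dd.adj⟩
  · by_cases hab : T'.Adj dd.fst b
    · exact ⟨dd.fst, hdS, hab⟩
    · obtain ⟨d, -, hd2, hd3⟩ := hPD dd.fst b dd.snd hdS h dd.adj hab
      exact ⟨d, hd2, hd3⟩

variable [Fintype V] [DecidableEq V]

/-- The minimum of a component of `T' − Vs` is adjacent to (and later than) the
attachment vertex. -/
lemma min_comp (hT' : T'.IsTree) (hVs : (T'.induce Vs).Connected)
    (hg1 : ∀ x ∉ Vs, g x ∈ Vs)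
    (hg2 : ∀ x, ∀ hx : x ∉ Vs, ∃ y, ∃ hy : y ∉ Vs,
      (T'.induce (Vsᶜ : Set V)).Reachable ⟨x, hx⟩ ⟨y, hy⟩ ∧ T'.Adj (g x) y)
    (hg3 : ∀ x, ∀ hx : x ∉ Vs, ∀ y, ∀ hy : y ∉ Vs,
      (T'.induce (Vsᶜ : Set V)).Reachable ⟨x, hx⟩ ⟨y, hy⟩ → g x = g y)
    (h3 : IsTrichotomous V lt) (htr : IsTrans V lt) (hir : IsIrrefl V lt)
    (hPD : PropertyD T' lt) {r : V} (hr : ∀ x, x ≠ r → lt r x) (hrVs : r ∈ Vs)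
    (hx : x ∉ Vs) :
    ∃ y0, InComp T' Vs x y0 ∧ T'.Adj (g x) y0 ∧ lt (g x) y0 ∧
      ∀ z, InComp T' Vs x z → ¬ lt z y0 := by
  haveI := htr; haveI := hir
  obtain ⟨y0, hy0S, hy0min⟩ := (Finite.wellFounded_of_trans_of_irrefl lt).has_min
    {z | InComp T' Vs x z} ⟨x, incomp_refl hx⟩
  have hy0 : y0 ∉ Vs := hy0S.not_right
  have hy0r : y0 ≠ r := fun h => hy0 (h ▸ hrVs)
  obtain ⟨d, hdlt, hdadj⟩ := exists_earlier_nbr hT'.isConnected h3 hir hPD hr y0 hy0r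
  rcases nbr_struct hT' hVs hg2 (hg1 y0 hy0) hy0 hdadj.symm with hd | hd
  · have hgg : g y0 = g x := by
      obtain ⟨hx', hy', hre⟩ := hy0S
      exact (hg3 x hx' y0 hy' hre).symm
    rw [hd, hgg] at hdadj hdlt
    exact ⟨y0, hy0S, hdadj, hdlt, fun z hz => hy0min z hz⟩
  · exact absurd hdlt (hy0min d (hy0S.trans hd))

/-- `g x` comes before `x`. -/
lemma g_lt (hT' : T'.IsTree) (hVs : (T'.induce Vs).Connected)
    (hg1 : ∀ x ∉ Vs, g x ∈ Vs)
    (hg2 : ∀ x, ∀ hx : x ∉ Vs, ∃ y, ∃ hy : y ∉ Vs,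
      (T'.induce (Vsᶜ : Set V)).Reachable ⟨x, hx⟩ ⟨y, hy⟩ ∧ T'.Adj (g x) y)
    (hg3 : ∀ x, ∀ hx : x ∉ Vs, ∀ y, ∀ hy : y ∉ Vs,
      (T'.induce (Vsᶜ : Set V)).Reachable ⟨x, hx⟩ ⟨y, hy⟩ → g x = g y)
    (h3 : IsTrichotomous V lt) (htr : IsTrans V lt) (hir : IsIrrefl V lt)
    (hPD : PropertyD T' lt) {r : V} (hr : ∀ x, x ≠ r → lt r x) (hrVs : r ∈ Vs)
    (hx : x ∉ Vs) : lt (g x) x := by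
  obtain ⟨y0, hy0C, -, hlt, hmin⟩ :=
    min_comp hT' hVs hg1 hg2 hg3 h3 htr hir hPD hr hrVs hx
  rcases (haveI := h3; trichotomous_of lt y0 x) with h | h | h
  · exact htr.1 _ _ _ hlt h
  · exact h ▸ hlt
  · exact absurd h (hmin x (incomp_refl hx))

/-- Contiguity: between the minimum of a component and any element of the
component, only elements of the component occur. -/
lemma interval (hT' : T'.IsTree) (hVs : (T'.induce Vs).Connected)
    (hg1 : ∀ x ∉ Vs, g x ∈ Vs)
    (hg2 : ∀ x, ∀ hx : x ∉ Vs, ∃ y, ∃ hy : y ∉ Vs,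
      (T'.induce (Vsᶜ : Set V)).Reachable ⟨x, hx⟩ ⟨y, hy⟩ ∧ T'.Adj (g x) y)
    (hg3 : ∀ x, ∀ hx : x ∉ Vs, ∀ y, ∀ hy : y ∉ Vs,
      (T'.induce (Vsᶜ : Set V)).Reachable ⟨x, hx⟩ ⟨y, hy⟩ → g x = g y)
    (h3 : IsTrichotomous V lt) (htr : IsTrans V lt) (hir : IsIrrefl V lt)
    (hPD : PropertyD T' lt)
    (hx : x ∉ Vs) {y0 : V} (hy0 : InComp T' Vs x y0) (hgy0 : lt (g x) y0)
    (hmin : ∀ z, InComp T' Vs x z → ¬ lt z y0) :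
    ∀ w, lt y0 w → (∃ v, InComp T' Vs x v ∧ lt w v) → InComp T' Vs x w := by
  haveI := htr; haveI := hir
  have hasymm : ∀ {p q : V}, lt p q → ¬ lt q p := fun h h' => hir.1 _ (htr.1 _ _ _ h h')
  intro w
  refine (Finite.wellFounded_of_trans_of_irrefl lt).induction
    (C := fun w => lt y0 w → (∃ v, InComp T' Vs x v ∧ lt w v) → InComp T' Vs x w) w ?_
  clear w
  intro w IH hy0w hex
  by_contra hwC
  obtain ⟨v, hv, hwv⟩ := hex
  obtain ⟨hx0, hy0', hre⟩ := hy0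
  obtain ⟨hx0', hv', hrev⟩ := hv
  have hrv : (T'.induce (Vsᶜ : Set V)).Reachable ⟨y0, hy0'⟩ ⟨v, hv'⟩ := hre.symm.trans hrev
  obtain ⟨q⟩ := hrv
  obtain ⟨dd, hdmem, hdS, hdnS⟩ :=
    q.exists_boundary_dart {z : (Vsᶜ : Set V) | lt z.1 w} hy0w (hasymm hwv)
  have haC : InComp T' Vs x dd.fst.1 :=
    ⟨hx0, dd.fst.2, hre.trans ⟨q.takeUntil dd.fst (q.dart_fst_mem_support_of_mem_darts hdmem)⟩⟩
  have hzC : InComp T' Vs x dd.snd.1 :=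
    ⟨hx0, dd.snd.2, hre.trans ⟨q.takeUntil dd.snd (q.dart_snd_mem_support_of_mem_darts hdmem)⟩⟩
  have hadj' : T'.Adj dd.fst.1 dd.snd.1 := dd.adj
  have hWgx : w ≠ g x := by
    rintro rfl
    exact hir.1 _ (htr.1 _ _ _ hgy0 hy0w)
  have hnadj : ¬ T'.Adj dd.fst.1 w := by
    intro hc
    rcases nbr_struct hT' hVs hg2 (hg1 _ haC.not_right) haC.not_right hc with h | h
    · obtain ⟨hx1, ha1, hra⟩ := haC
      exact hWgx (h.trans (hg3 x hx1 _ ha1 hra).symm)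
    · exact hwC (haC.trans h)
  have hwz : lt w dd.snd.1 := by
    rcases (haveI := h3; trichotomous_of lt dd.snd.1 w) with h | h | h
    · exact absurd h hdnS
    · exact absurd (h ▸ hzC) hwC
    · exact h
  obtain ⟨d, had, hdw, hadjdw⟩ := hPD dd.fst.1 w dd.snd.1 hdS hwz hadj' hnadj
  have hy0d : lt y0 d := by
    rcases (haveI := h3; trichotomous_of lt dd.fst.1 y0) with h | h | h
    · exact absurd h (hmin _ haC)
    · exact h ▸ had
    · exact htr.1 _ _ _ h had
  have hdC : InComp T' Vs x d := IH d hdw hy0d ⟨v, ⟨hx0', hv', hrev⟩, htr.1 _ _ _ hdw hwv⟩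
  rcases nbr_struct hT' hVs hg2 (hg1 _ hdC.not_right) hdC.not_right hadjdw with h | h
  · obtain ⟨hx1, hd1, hrd⟩ := hdC
    exact hWgx (h.trans (hg3 x hx1 _ hd1 hrd).symm)
  · exact hwC (hdC.trans h)

end Order
end Stmt7Helper

/-- Let `T'` be a DFS-tree support of a set `Pi` of orderings on a finite vertex
set `V` (each ordering is a strict linear order, and each satisfies Property D
w.r.t. `T'`).  Let `Vs ⊆ V` induce a subtree of `T'` containing the first vertex
of every ordering of `Pi`.  For every connected component `C` of `T' − Vs`, let
`v_C` be the (unique) vertex of `Vs` adjacent in `T'` to a vertex of `C`; this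
is encoded by a function `g` that is constant on components of `T' − Vs`, maps
into `Vs`, and is adjacent in `T'` to some vertex of the component.  Let `T` be
the graph consisting of the induced subtree `T'[Vs]` together with, for every
vertex `x ∉ Vs`, the edge `{g x, x}`.  Then `T` is a tree in which every vertex
outside `Vs` is a leaf (has exactly one neighbor), and every ordering of `Pi`
satisfies Property D with respect to `T`. -/
theorem stmt7 {V : Type*} [Fintype V]
    (T' : SimpleGraph V) (hT' : T'.IsTree)
    (Pi : Set (V → V → Prop))
    (hlin : ∀ lt ∈ Pi, IsTrichotomous V lt ∧ IsTrans V lt ∧ IsIrrefl V lt)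
    (hPD : ∀ lt ∈ Pi, PropertyD T' lt)
    (Vs : Set V)
    (hVsTree : (T'.induce Vs).IsTree)
    (hfirst : ∀ lt ∈ Pi, ∀ r : V, (∀ x : V, x ≠ r → lt r x) → r ∈ Vs)
    (g : V → V)
    (hg1 : ∀ x ∉ Vs, g x ∈ Vs)
    (hg2 : ∀ x, ∀ hx : x ∉ Vs, ∃ y, ∃ hy : y ∉ Vs,
      (T'.induce (Vsᶜ : Set V)).Reachable ⟨x, hx⟩ ⟨y, hy⟩ ∧ T'.Adj (g x) y)
    (hg3 : ∀ x, ∀ hx : x ∉ Vs, ∀ y, ∀ hy : y ∉ Vs,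
      (T'.induce (Vsᶜ : Set V)).Reachable ⟨x, hx⟩ ⟨y, hy⟩ → g x = g y)
    (T : SimpleGraph V)
    (hT : ∀ a b : V, T.Adj a b ↔
      ((a ∈ Vs ∧ b ∈ Vs ∧ T'.Adj a b) ∨ (a ∉ Vs ∧ b = g a) ∨ (b ∉ Vs ∧ a = g b))) :
    T.IsTree ∧ (∀ x ∉ Vs, ∃! y : V, T.Adj x y) ∧ ∀ lt ∈ Pi, PropertyD T lt := by
  classical
  have hVsConn := hVsTree.isConnected
  -- neighbors of a vertex outside `Vs`
  have leafAdj : ∀ x, x ∉ Vs → ∀ y, (T.Adj x y ↔ y = g x) := by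
    intro x hx y
    constructor
    · intro h
      rcases (hT x y).mp h with ⟨h1, -, -⟩ | ⟨-, h2⟩ | ⟨hy, h2⟩
      · exact absurd h1 hx
      · exact h2
      · rw [h2] at hx; exact absurd (hg1 y hy) hx
    · rintro rfl
      exact (hT x (g x)).mpr (Or.inr (Or.inl ⟨hx, rfl⟩))
  have part2 : ∀ x ∉ Vs, ∃! y : V, T.Adj x y := fun x hx =>
    ⟨g x, (leafAdj x hx (g x)).mpr rfl, fun y hy => (leafAdj x hx y).mp hy⟩
  -- connectivity
  have hne : Nonempty V := hT'.isConnected.nonempty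
  obtain ⟨⟨r0, hr0⟩⟩ : Nonempty ↥Vs := hVsConn.nonempty
  have reachVs : ∀ v, v ∈ Vs → T.Reachable v r0 := fun v hv =>
    SimpleGraph.Reachable.map
      (⟨fun a => a.1, fun {a b} hab => (hT a.1 b.1).mpr (Or.inl ⟨a.2, b.2, hab⟩)⟩ :
        T'.induce Vs →g T)
      (hVsConn.preconnected ⟨v, hv⟩ ⟨r0, hr0⟩)
  have reachAll : ∀ v, T.Reachable v r0 := by
    intro v
    by_cases hv : v ∈ Vs
    · exact reachVs v hv
    · exact (((leafAdj v hv (g v)).mpr rfl).reachable).trans (reachVs _ (hg1 v hv))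
  have hTconn : T.Connected := (SimpleGraph.connected_iff_exists_forall_reachable (G := T)).mpr
    ⟨r0, fun w => (reachAll w).symm⟩
  -- acyclicity
  have hacyc : T.IsAcyclic := by
    intro v c hc
    have hsupp : ∀ x ∈ c.support, x ∈ Vs := by
      intro x hxs
      by_contra hx
      have hc' := hc.rotate hxs
      set c' := c.rotate x hxs with hc'def
      have hnn : ¬ c'.Nil := hc'.not_nil
      have hcons := (SimpleGraph.Walk.cons_tail_eq c' hnn).symm
      rw [hcons, SimpleGraph.Walk.cons_isCycle_iff] at hc'
      obtain ⟨hpath, hedge⟩ := hc'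
      have hy1 : c'.getVert 1 = g x := (leafAdj x hx _).mp (c'.adj_snd hnn)
      have hxy : x ≠ c'.getVert 1 := by
        rw [hy1]
        intro h
        have hgn : g x ∉ Vs := h ▸ hx
        exact hgn (hg1 x hx)
      have hnn2 : ¬ c'.tail.reverse.Nil := SimpleGraph.Walk.not_nil_of_ne hxy
      have hadj2 := c'.tail.reverse.adj_snd hnn2
      have hw1 : c'.tail.reverse.getVert 1 = g x := (leafAdj x hx _).mp hadj2
      have hmem := Stmt7Helper.first_edge_mem c'.tail.reverse hnn2
      rw [SimpleGraph.Walk.edges_reverse, List.mem_reverse, hw1, ← hy1] at hmem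
      exact hedge hmem
    have hedges : ∀ e ∈ c.edges, e ∈ T'.edgeSet := by
      intro e
      refine Sym2.ind (fun a b he => ?_) e
      have hadj : T.Adj a b := c.adj_of_mem_edges he
      have ha := hsupp a (c.fst_mem_support_of_mem_edges he)
      have hb := hsupp b (c.snd_mem_support_of_mem_edges he)
      rcases (hT a b).mp hadj with ⟨-, -, h⟩ | ⟨h1, -⟩ | ⟨h1, -⟩
      · exact h
      · exact absurd ha h1
      · exact absurd hb h1
    exact hT'.IsAcyclic (c.transfer T' hedges) (hc.transfer hedges)
  refine ⟨⟨hTconn, hacyc⟩, part2, ?_⟩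
  -- Property D for T
  intro lt hltPi
  obtain ⟨h3, htr, hir⟩ := hlin lt hltPi
  have hPD' := hPD lt hltPi
  have hasymm : ∀ {p q : V}, lt p q → ¬ lt q p := fun h h' => hir.1 _ (htr.1 _ _ _ h h')
  haveI := htr; haveI := hir
  obtain ⟨r, -, hrmin⟩ := (Finite.wellFounded_of_trans_of_irrefl lt).has_min Set.univ
    ⟨hne.some, trivial⟩
  have hr : ∀ x, x ≠ r → lt r x := by
    intro x hxr
    rcases (haveI := h3; trichotomous_of lt r x) with h | h | h
    · exact h
    · exact absurd h.symm hxr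
    · exact absurd h (hrmin x trivial)
  have hrVs : r ∈ Vs := hfirst lt hltPi r hr
  have hglt : ∀ x, x ∉ Vs → lt (g x) x := fun x hx =>
    Stmt7Helper.g_lt hT' hVsConn hg1 hg2 hg3 h3 htr hir hPD' hr hrVs hx
  have minC := fun x hx =>
    Stmt7Helper.min_comp (g := g) hT' hVsConn hg1 hg2 hg3 h3 htr hir hPD' hr hrVs (x := x) hx
  have intvl := fun x hx {y0} h1 h2 h4 =>
    Stmt7Helper.interval (g := g) hT' hVsConn hg1 hg2 hg3 h3 htr hir hPD' (x := x) hx (y0 := y0) h1 h2 h4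
  have finalAdj : ∀ b, b ∈ Vs → ∀ d, T'.Adj d b → T.Adj d b := by
    intro b hb d hdb
    by_cases hd : d ∈ Vs
    · exact (hT d b).mpr (Or.inl ⟨hd, hb, hdb⟩)
    · exact (hT d b).mpr (Or.inr (Or.inl ⟨hd,
        (Stmt7Helper.attach_unique hT' hVsConn hg2 (hg1 d hd) hd hb hdb).symm ▸ rfl⟩))
  intro a b c hab hbc hac hnab
  rw [hT] at hac
  rcases hac with ⟨haVs, hcVs, hac'⟩ | ⟨haN, hcga⟩ | ⟨hcN, haga⟩
  · -- Case A : a, c ∈ Vs, T'.Adj a c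
    by_cases hbVs : b ∈ Vs
    · have hnab' : ¬ T'.Adj a b := fun h => hnab ((hT a b).mpr (Or.inl ⟨haVs, hbVs, h⟩))
      obtain ⟨d, h1, h2, h3'⟩ := hPD' a b c hab hbc hac' hnab'
      exact ⟨d, h1, h2, finalAdj b hbVs d h3'⟩
    · obtain ⟨y0, hy0C, hy0adj, hy0lt, hy0min⟩ := minC b hbVs
      have hanegb : a ≠ g b := fun h =>
        hnab ((hT a b).mpr (Or.inr (Or.inr ⟨hbVs, h⟩)))
      have hy0b : y0 = b ∨ lt y0 b := by
        rcases (haveI := h3; trichotomous_of lt y0 b) with h | h | h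
        · exact Or.inr h
        · exact Or.inl h
        · exact absurd h (hy0min b (Stmt7Helper.incomp_refl hbVs))
      have hy0c : lt y0 c := by
        rcases hy0b with h | h
        · exact h ▸ hbc
        · exact htr.1 _ _ _ h hbc
      have key : lt a (g b) := by
        by_contra hcon
        have hgba : lt (g b) a := by
          rcases (haveI := h3; trichotomous_of lt a (g b)) with h | h | h
          · exact absurd h hcon
          · exact absurd h hanegb
          · exact h
        have haC : ¬ Stmt7Helper.InComp T' Vs b a := fun h => h.not_right haVs
        have hay0 : lt a y0 := by
          rcases (haveI := h3; trichotomous_of lt a y0) with h | h | h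
          · exact h
          · exact absurd (h ▸ haVs) hy0C.not_right
          · exact absurd (intvl b hbVs hy0C hy0lt hy0min a h ⟨b, Stmt7Helper.incomp_refl hbVs, hab⟩) haC
        have hnay0 : ¬ T'.Adj a y0 := by
          intro hcadj
          rcases Stmt7Helper.nbr_struct hT' hVsConn hg2 (hg1 y0 hy0C.not_right) hy0C.not_right
            hcadj.symm with h | h
          · obtain ⟨h1', h2', h3''⟩ := hy0C
            exact hanegb (h.trans (hg3 b h1' y0 h2' h3'').symm)
          · exact haC (hy0C.trans h)
        obtain ⟨d, hd1, hd2, hd3⟩ := hPD' a y0 c hay0 hy0c hac' hnay0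
        rcases Stmt7Helper.nbr_struct hT' hVsConn hg2 (hg1 y0 hy0C.not_right) hy0C.not_right
          hd3.symm with h | h
        · obtain ⟨h1', h2', h3''⟩ := hy0C
          rw [h, (hg3 b h1' y0 h2' h3'').symm] at hd1
          exact hasymm hgba hd1
        · exact absurd hd2 (hy0min d (hy0C.trans h))
      exact ⟨g b, key, hglt b hbVs, (hT (g b) b).mpr (Or.inr (Or.inr ⟨hbVs, rfl⟩))⟩
  · -- Case B : a ∉ Vs, c = g a : impossible
    rw [hcga] at hbc
    exact absurd (htr.1 _ _ _ hab hbc) (hasymm (hglt a haN))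
  · -- Case C : c ∉ Vs, a = g c
    have haVs : a ∈ Vs := by rw [haga]; exact hg1 c hcN
    obtain ⟨y0', hy0C', hy0adj', hy0lt', hy0min'⟩ := minC c hcN
    have hady0' : T'.Adj a y0' := by rw [haga]; exact hy0adj'
    by_cases hbVs : b ∈ Vs
    · have hby0' : lt b y0' := by
        rcases (haveI := h3; trichotomous_of lt b y0') with h | h | h
        · exact h
        · exact absurd (h ▸ hbVs) hy0C'.not_right
        · exact absurd ((intvl c hcN hy0C' hy0lt' hy0min' b h
            ⟨c, Stmt7Helper.incomp_refl hcN, hbc⟩).not_right) (fun hh => hh hbVs)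
      have hnab' : ¬ T'.Adj a b := fun h => hnab ((hT a b).mpr (Or.inl ⟨haVs, hbVs, h⟩))
      obtain ⟨d, h1, h2, h3'⟩ := hPD' a b y0' hab hby0' hady0' hnab'
      exact ⟨d, h1, h2, finalAdj b hbVs d h3'⟩
    · obtain ⟨y0, hy0C, hy0adj, hy0lt, hy0min⟩ := minC b hbVs
      have hanegb : a ≠ g b := fun h =>
        hnab ((hT a b).mpr (Or.inr (Or.inr ⟨hbVs, h⟩)))
      have hbc' : ¬ Stmt7Helper.InComp T' Vs b c := by
        intro h
        obtain ⟨hb', hc', hr'⟩ := h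
        exact hanegb (haga.trans (hg3 b hb' c hc' hr').symm)
      have hy0b : y0 = b ∨ lt y0 b := by
        rcases (haveI := h3; trichotomous_of lt y0 b) with h | h | h
        · exact Or.inr h
        · exact Or.inl h
        · exact absurd h (hy0min b (Stmt7Helper.incomp_refl hbVs))
      have hby0' : lt b y0' := by
        rcases (haveI := h3; trichotomous_of lt b y0') with h | h | h
        · exact h
        · exact absurd (show Stmt7Helper.InComp T' Vs b c by rw [h]; exact hy0C'.symm) hbc'
        · exact absurd ((intvl c hcN hy0C' hy0lt' hy0min' b h
            ⟨c, Stmt7Helper.incomp_refl hcN, hbc⟩).symm) hbc'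
      have hy0y0' : lt y0 y0' := by
        rcases hy0b with h | h
        · exact h ▸ hby0'
        · exact htr.1 _ _ _ h hby0'
      have key : lt a (g b) := by
        by_contra hcon
        have hgba : lt (g b) a := by
          rcases (haveI := h3; trichotomous_of lt a (g b)) with h | h | h
          · exact absurd h hcon
          · exact absurd h hanegb
          · exact h
        have haC : ¬ Stmt7Helper.InComp T' Vs b a := fun h => h.not_right haVs
        have hay0 : lt a y0 := by
          rcases (haveI := h3; trichotomous_of lt a y0) with h | h | h
          · exact h
          · exact absurd (h ▸ haVs) hy0C.not_right
          · exact absurd (intvl b hbVs hy0C hy0lt hy0min a h ⟨b, Stmt7Helper.incomp_refl hbVs, hab⟩) haC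
        have hnay0 : ¬ T'.Adj a y0 := by
          intro hcadj
          rcases Stmt7Helper.nbr_struct hT' hVsConn hg2 (hg1 y0 hy0C.not_right) hy0C.not_right
            hcadj.symm with h | h
          · obtain ⟨h1', h2', h3''⟩ := hy0C
            exact hanegb (h.trans (hg3 b h1' y0 h2' h3'').symm)
          · exact haC (hy0C.trans h)
        obtain ⟨d, hd1, hd2, hd3⟩ := hPD' a y0 y0' hay0 hy0y0' hady0' hnay0
        rcases Stmt7Helper.nbr_struct hT' hVsConn hg2 (hg1 y0 hy0C.not_right) hy0C.not_right
          hd3.symm with h | h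
        · obtain ⟨h1', h2', h3''⟩ := hy0C
          rw [h, (hg3 b h1' y0 h2' h3'').symm] at hd1
          exact hasymm hgba hd1
        · exact absurd hd2 (hy0min d (hy0C.trans h))
      exact ⟨g b, key, hglt b hbVs, (hT (g b) b).mpr (Or.inr (Or.inr ⟨hbVs, rfl⟩))⟩
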